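/- The generating function of the pair (length, delent number) over S_n factors as: Σ_{σ ∈ S_n} q^{ℓ_S(σ)} t^{del_S(σ)} = (1+qt)(1+q+q²t)···(1+q+...+q^{n-2}+q^{n-1}t). -/
import Mathlib


open scoped Classical
open Finset

noncomputable section

/-- `sgen n i` is the adjacent transposition `s_i = (i, i+1)` (1-indexed) in `S_n`,
realized as a permutation of `Fin n` (positions `1,…,n` correspond to `0,…,n-1`). -/
def sgen (n i : ℕ) : Equiv.Perm (Fin n) :=
  if h : 1 ≤ i ∧ i < n then Equiv.swap ⟨i - 1, by omega⟩ ⟨i, h.2⟩ else 1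

/-- `agen n i` is the generator `a_i = s_1 s_{i+1}` of the alternating group. -/
def agen (n i : ℕ) : Equiv.Perm (Fin n) := sgen n 1 * sgen n (i + 1)

/-- The descending product `s_j s_{j-1} ⋯ s_k` (equal to `1` when `k = j+1`). -/
def dProd (n j k : ℕ) : Equiv.Perm (Fin n) :=
  ((List.range (j + 1 - k)).map fun t => sgen n (j - t)).prod

/-- The descending product `a_j a_{j-1} ⋯ a_k` (equal to `1` when `k = j+1`). -/
def aDProd (n j k : ℕ) : Equiv.Perm (Fin n) :=
  ((List.range (j + 1 - k)).map fun t => agen n (j - t)).prod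

/-- `R^S_j = {1, s_j, s_j s_{j-1}, …, s_j s_{j-1} ⋯ s_1}`. -/
def RS (n j : ℕ) : Set (Equiv.Perm (Fin n)) :=
  { w | ∃ k, 1 ≤ k ∧ k ≤ j + 1 ∧ w = dProd n j k }

/-- `R^S_j` as a finite set. -/
def RSfin (n j : ℕ) : Finset (Equiv.Perm (Fin n)) :=
  (Finset.range (j + 1)).image fun k => dProd n j (k + 1)

/-- `R^A_j = {1, a_j, a_j a_{j-1}, …, a_j ⋯ a_2, a_j ⋯ a_2 a_1, a_j ⋯ a_2 a_1⁻¹}`. -/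
def RA (n j : ℕ) : Set (Equiv.Perm (Fin n)) :=
  { v | (∃ k, 1 ≤ k ∧ k ≤ j + 1 ∧ v = aDProd n j k) ∨ v = aDProd n j 2 * (agen n 1)⁻¹ }

/-- The element of `R^A_j` with code `k`:
`k = 0` encodes `a_j ⋯ a_2 a_1⁻¹`, and `k ≥ 1` encodes `a_j ⋯ a_k`. -/
def elemA (n j k : ℕ) : Equiv.Perm (Fin n) :=
  if k = 0 then aDProd n j 2 * (agen n 1)⁻¹ else aDProd n j k

/-- `k : Fin (n-1) → ℕ` codes the S-canonical presentation of `w`: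
the `j`-th factor is `s_{j+1} s_j ⋯ s_{k j} ∈ R^S_{j+1}` (`k j = j + 2` codes `1`). -/
def isCanonS (n : ℕ) (w : Equiv.Perm (Fin n)) (k : Fin (n - 1) → ℕ) : Prop :=
  (∀ j : Fin (n - 1), 1 ≤ k j ∧ k j ≤ (j : ℕ) + 2) ∧
    (List.ofFn fun j : Fin (n - 1) => dProd n ((j : ℕ) + 1) (k j)).prod = w

/-- The code of the S-canonical presentation of `w` (it is unique when it exists). -/
def kvecS (n : ℕ) (w : Equiv.Perm (Fin n)) : Fin (n - 1) → ℕ :=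
  if h : ∃ k, isCanonS n w k then h.choose else fun _ => 0

/-- `del_S w` : the number of occurrences of `s_1` in the S-canonical presentation of `w`
(the factor from `R^S_{j+1}` contains `s_1` exactly when its code is `1`). -/
def delS (n : ℕ) (w : Equiv.Perm (Fin n)) : ℕ :=
  (Finset.univ.filter fun j : Fin (n - 1) => kvecS n w j = 1).card

/-- `k : Fin (m-2) → ℕ` codes the A-canonical presentation of `v ∈ A_m`:
the `j`-th factor is `elemA m (j+1) (k j) ∈ R^A_{j+1}`. -/
def isCanonA (m : ℕ) (v : Equiv.Perm (Fin m)) (k : Fin (m - 2) → ℕ) : Prop :=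
  (∀ j : Fin (m - 2), k j ≤ (j : ℕ) + 2) ∧
    (List.ofFn fun j : Fin (m - 2) => elemA m ((j : ℕ) + 1) (k j)).prod = v

/-- The code of the A-canonical presentation of `v`. -/
def kvecA (m : ℕ) (v : Equiv.Perm (Fin m)) : Fin (m - 2) → ℕ :=
  if h : ∃ k, isCanonA m v k then h.choose else fun _ => 0

/-- `del_A v` : the number of occurrences of `a_1^{±1}` in the A-canonical presentation
(codes `0` and `1` are the two factors containing `a_1^{±1}`). -/
def delA (m : ℕ) (v : Equiv.Perm (Fin m)) : ℕ :=
  (Finset.univ.filter fun j : Fin (m - 2) => kvecA m v j ≤ 1).card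

/-- `ℓ_A v` : the total number of letters `a_i^{±1}` in the A-canonical presentation:
the factor of `R^A_{j+1}` with code `0` has `j+1` letters, the one with code `k ≥ 1`
has `j + 2 - k` letters. -/
def lenA (m : ℕ) (v : Equiv.Perm (Fin m)) : ℕ :=
  ∑ j : Fin (m - 2), if kvecA m v j = 0 then (j : ℕ) + 1 else (j : ℕ) + 2 - kvecA m v j

/-- `ℓ_S w` : the number of inversions of `w`. -/
def invS {n : ℕ} (w : Equiv.Perm (Fin n)) : ℕ :=
  (Finset.univ.filter fun p : Fin n × Fin n => p.1 < p.2 ∧ w p.2 < w p.1).card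

/-- The (1-indexed) descent set `Des_S(σ) = {1 ≤ i ≤ n-1 : σ(i) > σ(i+1)}`. -/
def Des1 {n : ℕ} (σ : Equiv.Perm (Fin n)) : Finset ℕ :=
  (Finset.Ico 1 n).filter fun i => ∃ h : i < n, σ ⟨i, h⟩ < σ ⟨i - 1, by omega⟩

/-- `rmaj_{S_m}(σ) = ∑_{i ∈ Des_S(σ)} (m - i)`. -/
def rmaj1 {n : ℕ} (m : ℕ) (σ : Equiv.Perm (Fin n)) : ℕ := ∑ i ∈ Des1 σ, (m - i)

/-- `maj_S(σ) = ∑_{i ∈ Des_S(σ)} i`. -/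
def maj1 {n : ℕ} (σ : Equiv.Perm (Fin n)) : ℕ := ∑ i ∈ Des1 σ, i

/-- `Del_S(σ)` : the (1-indexed) positions `1 < i ≤ n` which are left-to-right minima:
`σ(i) < σ(j)` for all `j < i`. -/
def DelSet {n : ℕ} (σ : Equiv.Perm (Fin n)) : Finset ℕ :=
  (Finset.Icc 2 n).filter fun i =>
    ∃ h : i - 1 < n, ∀ j : Fin n, (j : ℕ) < i - 1 → σ ⟨i - 1, h⟩ < σ j

/-- `del_S(σ)` computed combinatorially: the number of left-to-right minima of `σ`
other than the first position. -/
def delC {n : ℕ} (σ : Equiv.Perm (Fin n)) : ℕ := (DelSet σ).card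

/-- The Gaussian (q-)binomial coefficient, via the q-Pascal recursion. -/
def qbinom {R : Type*} [CommRing R] (q : R) : ℕ → ℕ → R
  | _, 0 => 1
  | 0, _ + 1 => 0
  | n + 1, k + 1 => qbinom q n k + q ^ (k + 1) * qbinom q n (k + 1)

end

noncomputable section Aux

variable {n : ℕ}

/-- Insert the maximal value `Fin.last n` at position `p` into the permutation `e`. -/
def Phi (e : Equiv.Perm (Fin n)) (p : Fin (n + 1)) : Equiv.Perm (Fin (n + 1)) :=
  ((finSuccEquiv' p).trans (Equiv.optionCongr (e : Fin n ≃ Fin n))).trans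
    (finSuccEquiv' (Fin.last n)).symm

lemma Phi_apply_self (e : Equiv.Perm (Fin n)) (p : Fin (n + 1)) :
    Phi e p p = Fin.last n := by
  simp [Phi]

lemma Phi_apply_succAbove (e : Equiv.Perm (Fin n)) (p : Fin (n + 1)) (i : Fin n) :
    Phi e p (p.succAbove i) = (e i).castSucc := by
  simp [Phi, Fin.succAbove_last]

lemma Phi_injective :
    Function.Injective (fun ep : Equiv.Perm (Fin n) × Fin (n + 1) => Phi ep.1 ep.2) := by
  rintro ⟨e, p⟩ ⟨f, r⟩ h
  simp only at h
  have hp : p = r := by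
    have h1 : Phi e p r = Fin.last n := by rw [h, Phi_apply_self]
    have h2 : Phi e p p = Fin.last n := Phi_apply_self e p
    exact (Phi e p).injective (h2.trans h1.symm)
  subst hp
  have he : e = f := by
    ext i
    have h1 : Phi e p (p.succAbove i) = Phi f p (p.succAbove i) := by rw [h]
    rw [Phi_apply_succAbove, Phi_apply_succAbove] at h1
    exact congrArg Fin.val (Fin.castSucc_injective n h1)
  rw [he]

lemma Phi_bijective :
    Function.Bijective (fun ep : Equiv.Perm (Fin n) × Fin (n + 1) => Phi ep.1 ep.2) := by
  rw [Fintype.bijective_iff_injective_and_card]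
  refine ⟨Phi_injective, ?_⟩
  simp [Fintype.card_perm, Nat.factorial_succ, Nat.mul_comm]

lemma invS_Phi (e : Equiv.Perm (Fin n)) (p : Fin (n + 1)) :
    invS (Phi e p) = invS e + (n - (p : ℕ)) := by
  classical
  have key := Finset.card_filter_add_card_filter_not
    (s := Finset.univ.filter fun q : Fin (n + 1) × Fin (n + 1) =>
      q.1 < q.2 ∧ Phi e p q.2 < Phi e p q.1)
    (fun q => q.1 = p)
  rw [Finset.filter_filter, Finset.filter_filter] at key
  have h1 : (Finset.univ.filter fun q : Fin (n + 1) × Fin (n + 1) =>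
      (q.1 < q.2 ∧ Phi e p q.2 < Phi e p q.1) ∧ q.1 = p).card = n - (p : ℕ) := by
    have himg : (Finset.univ.filter fun q : Fin (n + 1) × Fin (n + 1) =>
        (q.1 < q.2 ∧ Phi e p q.2 < Phi e p q.1) ∧ q.1 = p)
        = (Finset.Ioi p).image fun j => (p, j) := by
      ext q
      simp only [Finset.mem_filter, Finset.mem_univ, true_and, Finset.mem_image,
        Finset.mem_Ioi]
      constructor
      · rintro ⟨⟨hlt, -⟩, h1⟩
        subst h1
        exact ⟨q.2, hlt, rfl⟩
      · rintro ⟨j, hj, rfl⟩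
        refine ⟨⟨hj, ?_⟩, rfl⟩
        have hne : j ≠ p := hj.ne'
        obtain ⟨i, hi⟩ := Fin.exists_succAbove_eq hne
        rw [Phi_apply_self, ← hi, Phi_apply_succAbove]
        exact Fin.castSucc_lt_last _
    rw [himg, Finset.card_image_of_injective _ (fun a b hab => by
      simpa using congrArg Prod.snd hab)]
    simp [Fin.card_Ioi]
  have h2 : invS e = (Finset.univ.filter fun q : Fin (n + 1) × Fin (n + 1) =>
      (q.1 < q.2 ∧ Phi e p q.2 < Phi e p q.1) ∧ ¬ q.1 = p).card := by
    rw [invS]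
    apply Finset.card_bij (fun (q : Fin n × Fin n) _ => (p.succAbove q.1, p.succAbove q.2))
    · rintro ⟨a, b⟩ hab
      simp only [Finset.mem_filter, Finset.mem_univ, true_and] at hab ⊢
      obtain ⟨hlt, hinv⟩ := hab
      refine ⟨⟨Fin.succAbove_lt_succAbove_iff.2 hlt, ?_⟩, Fin.succAbove_ne p a⟩
      rw [Phi_apply_succAbove, Phi_apply_succAbove]
      exact Fin.castSucc_lt_castSucc_iff.2 hinv
    · rintro ⟨a, b⟩ _ ⟨c, d⟩ _ h
      have hfst := congrArg Prod.fst h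
      have hsnd := congrArg Prod.snd h
      simp only at hfst hsnd
      have h1 := Fin.succAbove_right_injective (p := p) hfst
      have h2 := Fin.succAbove_right_injective (p := p) hsnd
      simp_all
    · rintro ⟨a, b⟩ hb
      simp only [Finset.mem_filter, Finset.mem_univ, true_and] at hb
      obtain ⟨⟨hlt, hinv⟩, hap⟩ := hb
      have hbp : b ≠ p := by
        rintro rfl
        rw [Phi_apply_self] at hinv
        exact absurd hinv (not_lt.2 (Fin.le_last _))
      obtain ⟨i, hi⟩ := Fin.exists_succAbove_eq (show a ≠ p from hap)
      obtain ⟨j, hj⟩ := Fin.exists_succAbove_eq hbp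
      refine ⟨(i, j), ?_, by simp [hi, hj]⟩
      simp only [Finset.mem_filter, Finset.mem_univ, true_and]
      constructor
      · rw [← hi, ← hj] at hlt
        exact Fin.succAbove_lt_succAbove_iff.1 hlt
      · rw [← hi, ← hj, Phi_apply_succAbove, Phi_apply_succAbove] at hinv
        exact Fin.castSucc_lt_castSucc_iff.1 hinv
  have htot : invS (Phi e p) = (Finset.univ.filter fun q : Fin (n + 1) × Fin (n + 1) =>
      q.1 < q.2 ∧ Phi e p q.2 < Phi e p q.1).card := rfl
  omega

/-- The set of left-to-right minima positions (other than `0`). -/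
def Mins {m : ℕ} (σ : Equiv.Perm (Fin m)) : Finset (Fin m) :=
  Finset.univ.filter fun r => 0 < (r : ℕ) ∧ ∀ j, j < r → σ r < σ j

lemma delC_eq_card_Mins {m : ℕ} (σ : Equiv.Perm (Fin m)) : delC σ = (Mins σ).card := by
  classical
  have himg : DelSet σ = (Mins σ).image fun r : Fin m => (r : ℕ) + 1 := by
    ext i
    constructor
    · intro hi
      rw [DelSet, Finset.mem_filter, Finset.mem_Icc] at hi
      obtain ⟨⟨h2i, him⟩, h, hmin⟩ := hi
      rw [Finset.mem_image]
      refine ⟨⟨i - 1, h⟩, ?_, by show i - 1 + 1 = i; omega⟩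
      simp only [Mins, Finset.mem_filter, Finset.mem_univ, true_and]
      refine ⟨by show 0 < i - 1; omega, ?_⟩
      intro j hj
      exact hmin j (by simpa [Fin.lt_iff_val_lt_val] using hj)
    · intro hi
      rw [Finset.mem_image] at hi
      obtain ⟨r, hr, rfl⟩ := hi
      simp only [Mins, Finset.mem_filter, Finset.mem_univ, true_and] at hr
      obtain ⟨hr0, hmin⟩ := hr
      have hrm := r.isLt
      rw [DelSet, Finset.mem_filter, Finset.mem_Icc]
      refine ⟨⟨by omega, by omega⟩, by omega, ?_⟩
      intro j hj
      have heq : (⟨(r : ℕ) + 1 - 1, by omega⟩ : Fin m) = r := by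
        ext
        simp
      rw [heq]
      exact hmin j (by rw [Fin.lt_iff_val_lt_val]; omega)
  rw [delC, himg, Finset.card_image_of_injective]
  intro a b hab
  simp only at hab
  exact Fin.ext (by omega)

lemma mins_Phi (e : Equiv.Perm (Fin n)) (p : Fin (n + 1)) :
    Mins (Phi e p) = (Finset.univ.filter fun i : Fin n =>
      (∀ j, j < i → e i < e j) ∧ 0 < ((p.succAbove i : Fin (n + 1)) : ℕ)).image p.succAbove := by
  classical
  ext r
  simp only [Mins, Finset.mem_filter, Finset.mem_image, Finset.mem_univ, true_and]
  constructor
  · rintro ⟨hr, hmin⟩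
    have hrp : r ≠ p := by
      rintro rfl
      have h0 := hmin 0 (by rw [Fin.lt_iff_val_lt_val]; simpa using hr)
      rw [Phi_apply_self] at h0
      exact absurd h0 (not_lt.2 (Fin.le_last _))
    obtain ⟨i, hi⟩ := Fin.exists_succAbove_eq hrp
    refine ⟨i, ⟨?_, by rw [hi]; exact hr⟩, hi⟩
    intro j hj
    have h2 := hmin (p.succAbove j) (by rw [← hi]; exact Fin.succAbove_lt_succAbove_iff.2 hj)
    rw [← hi, Phi_apply_succAbove, Phi_apply_succAbove] at h2
    exact Fin.castSucc_lt_castSucc_iff.1 h2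
  · rintro ⟨i, ⟨hmin, hpos⟩, rfl⟩
    refine ⟨hpos, ?_⟩
    intro j hj
    rcases eq_or_ne j p with rfl | hjp
    · rw [Phi_apply_self, Phi_apply_succAbove]
      exact Fin.castSucc_lt_last _
    · obtain ⟨i', hi'⟩ := Fin.exists_succAbove_eq hjp
      rw [← hi', Phi_apply_succAbove, Phi_apply_succAbove]
      rw [← hi'] at hj
      exact Fin.castSucc_lt_castSucc_iff.2 (hmin i' (Fin.succAbove_lt_succAbove_iff.1 hj))

lemma delC_Phi (hn : 0 < n) (e : Equiv.Perm (Fin n)) (p : Fin (n + 1)) :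
    delC (Phi e p) = delC e + (if p = 0 then 1 else 0) := by
  classical
  haveI : NeZero n := ⟨hn.ne'⟩
  rw [delC_eq_card_Mins, delC_eq_card_Mins, mins_Phi,
    Finset.card_image_of_injective _ Fin.succAbove_right_injective]
  set z : Fin n := ⟨0, hn⟩ with hz
  rcases eq_or_ne p 0 with rfl | hp
  · simp only [if_pos rfl]
    have hall : ∀ i : Fin n, 0 < (((0 : Fin (n + 1)).succAbove i : Fin (n + 1)) : ℕ) := by
      intro i
      rw [Fin.succAbove_zero]
      simp [Fin.val_succ]
    have hins : (Finset.univ.filter fun i : Fin n =>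
        (∀ j, j < i → e i < e j) ∧ 0 < (((0 : Fin (n + 1)).succAbove i : Fin (n + 1)) : ℕ))
        = insert z (Mins e) := by
      ext i
      simp only [Mins, Finset.mem_filter, Finset.mem_insert, Finset.mem_univ, true_and]
      constructor
      · rintro ⟨hmin, -⟩
        rcases Nat.eq_zero_or_pos (i : ℕ) with h0 | h0
        · exact Or.inl (Fin.ext h0)
        · exact Or.inr ⟨h0, hmin⟩
      · rintro (rfl | ⟨h0, hmin⟩)
        · refine ⟨?_, hall z⟩
          intro j hj
          rw [Fin.lt_iff_val_lt_val] at hj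
          have hzv : (z : ℕ) = 0 := rfl
          rw [hzv] at hj
          exact absurd hj (by omega)
        · exact ⟨hmin, hall i⟩
    have hnm : z ∉ Mins e := by
      simp only [Mins, Finset.mem_filter, Finset.mem_univ, true_and, not_and]
      intro h0
      exact (Nat.lt_irrefl 0 h0).elim
    rw [hins, Finset.card_insert_of_notMem hnm]
    simp
  · simp only [if_neg hp, Nat.add_zero]
    have hv0 : ((0 : Fin n) : ℕ) = 0 := by simp
    have hset : (Finset.univ.filter fun i : Fin n =>
        (∀ j, j < i → e i < e j) ∧ 0 < ((p.succAbove i : Fin (n + 1)) : ℕ)) = Mins e := by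
      ext i
      simp only [Mins, Finset.mem_filter, Finset.mem_univ, true_and]
      have hiff : 0 < ((p.succAbove i : Fin (n + 1)) : ℕ) ↔ 0 < (i : ℕ) := by
        constructor
        · intro hpos
          rcases Nat.eq_zero_or_pos (i : ℕ) with h0 | h0
          · exfalso
            have hi0 : i = 0 := Fin.ext (by rw [hv0]; exact h0)
            rw [hi0, (Fin.succAbove_eq_zero_iff hp).2 rfl] at hpos
            simp at hpos
          · exact h0
        · intro h0
          have hi0 : i ≠ 0 := by
            intro h
            rw [h, hv0] at h0
            exact lt_irrefl 0 h0
          have h2 := Fin.pos_of_ne_zero (Fin.succAbove_ne_zero hp hi0)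
          rw [Fin.lt_iff_val_lt_val] at h2
          simpa using h2
      rw [hiff]
      tauto
    rw [hset]

end Aux

/-- `∑_{σ ∈ S_n} q^{ℓ_S(σ)} t^{del_S(σ)} = (1+qt)(1+q+q²t)⋯(1+q+⋯+q^{n-2}+q^{n-1}t)`. -/
theorem stmt8 (n : ℕ) (R : Type*) [CommRing R] (q t : R) :
    ∑ σ : Equiv.Perm (Fin n), q ^ invS σ * t ^ delC σ =
      ∏ j ∈ Finset.range (n - 1), ((∑ i ∈ Finset.range (j + 1), q ^ i) + q ^ (j + 1) * t) := by
  induction n with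
  | zero =>
    rw [show (0 : ℕ) - 1 = 0 from rfl, Finset.range_zero, Finset.prod_empty]
    have h1 : ∀ σ : Equiv.Perm (Fin 0), q ^ invS σ * t ^ delC σ = 1 := by
      intro σ
      have e1 : invS σ = 0 := by simp [invS]
      have e2 : delC σ = 0 := by
        rw [delC, DelSet, Finset.Icc_eq_empty (by omega), Finset.filter_empty,
          Finset.card_empty]
      simp [e1, e2]
    rw [Finset.sum_congr rfl fun σ _ => h1 σ]
    simp [Finset.card_univ, Fintype.card_perm]
  | succ m ih =>
    rcases Nat.eq_zero_or_pos m with rfl | hm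
    · rw [show (0 : ℕ) + 1 - 1 = 0 from rfl, Finset.range_zero, Finset.prod_empty]
      have h1 : ∀ σ : Equiv.Perm (Fin 1), q ^ invS σ * t ^ delC σ = 1 := by
        intro σ
        have e1 : invS σ = 0 := by
          rw [invS, Finset.card_eq_zero, Finset.filter_eq_empty_iff]
          rintro ⟨a, b⟩ -
          simp [Subsingleton.elim a b]
        have e2 : delC σ = 0 := by
          rw [delC, DelSet, Finset.Icc_eq_empty (by omega), Finset.filter_empty,
            Finset.card_empty]
        simp [e1, e2]
      rw [Finset.sum_congr rfl fun σ _ => h1 σ]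
      simp [Finset.card_univ, Fintype.card_perm]
    · have hbij := Fintype.sum_bijective _ (Phi_bijective (n := m))
        (fun ep : Equiv.Perm (Fin m) × Fin (m + 1) =>
          q ^ invS (Phi ep.1 ep.2) * t ^ delC (Phi ep.1 ep.2))
        (fun σ => q ^ invS σ * t ^ delC σ) (fun ep => rfl)
      rw [← hbij]
      have hptw : ∀ ep : Equiv.Perm (Fin m) × Fin (m + 1),
          q ^ invS (Phi ep.1 ep.2) * t ^ delC (Phi ep.1 ep.2)
          = (q ^ invS ep.1 * t ^ delC ep.1) *
            (q ^ (m - (ep.2 : ℕ)) * t ^ (if ep.2 = 0 then 1 else 0)) := by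
        intro ep
        rw [invS_Phi, delC_Phi hm, pow_add, pow_add]
        ring
      rw [Finset.sum_congr rfl fun ep _ => hptw ep]
      have hfac : ∑ p : Fin (m + 1), q ^ (m - (p : ℕ)) * t ^ (if p = 0 then 1 else 0)
          = (∑ i ∈ Finset.range m, q ^ i) + q ^ m * t := by
        rw [Fin.sum_univ_succ]
        have hterm : ∀ i : Fin m,
            q ^ (m - ((i.succ : Fin (m + 1)) : ℕ)) *
              t ^ (if (i.succ : Fin (m + 1)) = 0 then 1 else 0)
            = q ^ (m - 1 - (i : ℕ)) := by
          intro i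
          rw [if_neg (Fin.succ_ne_zero i), pow_zero, mul_one, Fin.val_succ]
          congr 1
          omega
        rw [Finset.sum_congr rfl fun i _ => hterm i,
          Fin.sum_univ_eq_sum_range (fun i => q ^ (m - 1 - i)) m,
          Finset.sum_range_reflect (fun i => q ^ i) m]
        rw [if_pos rfl]
        simp only [Fin.val_zero, Nat.sub_zero, pow_one]
        ring
      rw [← Finset.univ_product_univ, Finset.sum_product]
      have hstep : ∀ e : Equiv.Perm (Fin m), (∑ p : Fin (m + 1),
          (q ^ invS e * t ^ delC e) * (q ^ (m - (p : ℕ)) * t ^ (if p = 0 then 1 else 0)))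
          = (q ^ invS e * t ^ delC e) * ((∑ i ∈ Finset.range m, q ^ i) + q ^ m * t) := by
        intro e
        rw [← Finset.mul_sum, hfac]
      rw [Finset.sum_congr rfl fun e _ => hstep e, ← Finset.sum_mul, ih]
      rw [show m + 1 - 1 = m from rfl]
      have hm1 : m = (m - 1) + 1 := by omega
      conv_rhs => rw [hm1, Finset.prod_range_succ]
      rw [← hm1]
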